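/- Characterization of μ (Lemma 1): Let T be a rooted weighted tree, u a vertex with children u_1,…,u_d and parent edge e_u, ξ ≥ 0, k ≥ 1, l ≥ 0. Then μ_ξ(u,k,l) = 1 if and only if either Γ_ξ(u,k,l) ≤ ξ·ω(T_u) − c(e_u), or there exist nonnegative integers k_1+⋯+k_d = k and l_1+⋯+l_d = l−1 with μ_ξ(u_i,k_i,l_i) = 1 for all 1 ≤ i ≤ d. -/

import Mathlib

open scoped Classical

noncomputable section

/-- A finite rooted weighted tree, encoded by a parent function. The root has an
auxiliary parent edge `e_root` of weight `0` (`parent root = root`). Edges are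
identified with their lower endpoints: the parent edge `e_v` of a vertex `v`
has weight `c v`. -/
structure RTree (V : Type) [Fintype V] [DecidableEq V] where
  root : V
  parent : V → V
  w : V → ℚ
  c : V → ℚ
  parent_root : parent root = root
  reaches_root : ∀ v : V, ∃ n : ℕ, parent^[n] v = root
  w_pos : ∀ v : V, 0 < w v
  c_pos : ∀ v : V, v ≠ root → 0 < c v
  c_root : c root = 0

namespace RTree

variable {V : Type} [Fintype V] [DecidableEq V] (T : RTree V)

/-- `v` lies in the subtree rooted at `u` (equivalently, edge `e_v ≤ e_u` in the
natural partial order induced by the root). -/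
def below (u v : V) : Prop := ∃ n : ℕ, T.parent^[n] v = u

/-- The vertex set of the subtree `T_u` (also of `T_{e_u}`). -/
def desc (u : V) : Finset V := Finset.univ.filter (fun v => T.below u v)

/-- Total vertex weight `ω(A)`. -/
def wsum (A : Finset V) : ℚ := ∑ v ∈ A, T.w v

/-- The (lower endpoints of) edges with exactly one endpoint in `A`, relative to a
ground set `W` of edges/vertices (`W = univ` gives the whole tree `T`). -/
def boundaryW (W A : Finset V) : Finset V :=
  W.filter (fun v => Xor' (v ∈ A) (T.parent v ∈ A))

/-- The edge boundary `∂A` in the whole tree. -/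
def boundary (A : Finset V) : Finset V := T.boundaryW Finset.univ A

/-- `c(∂A)` relative to ground set `W`. -/
def cutW (W A : Finset V) : ℚ := ∑ v ∈ T.boundaryW W A, T.c v

/-- `c(∂A)` in the whole tree. -/
def cut (A : Finset V) : ℚ := T.cutW Finset.univ A

/-- Vertex set of the subtree `T_u` relative to the ground set `W`. -/
def descW (W : Finset V) (u : V) : Finset V := T.desc u ∩ W

/-- `ε_ξ(e_v) = ξ·ω(T_{e_v}) + c(e_v)`. -/
def eps (ξ : ℚ) (v : V) : ℚ := ξ * T.wsum (T.desc v) + T.c v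

/-- `A` induces a connected subgraph (a subtree) of the tree: some `a ∈ A` is
reachable from every `v ∈ A` by a parent-chain staying inside `A`. -/
def connectedIn (A : Finset V) : Prop :=
  ∃ a ∈ A, ∀ v ∈ A, ∃ n : ℕ, T.parent^[n] v = a ∧ ∀ m : ℕ, m ≤ n → T.parent^[m] v ∈ A

/-- The children of a vertex. -/
def children (u : V) : Finset V :=
  Finset.univ.filter (fun v => T.parent v = u ∧ v ≠ u)

/-- `A` witnesses `μ_ξ(u,k,l) = 1` relative to ground set `W`: a connected
`k`-subpartition of `T_u` whose parts all have conductance at most `ξ`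
(boundaries computed in the ground set), with at most `l` residue vertices. -/
def muWitnessW (W : Finset V) (ξ : ℚ) (u : V) {k : ℕ} (A : Fin k → Finset V) (l : ℕ) : Prop :=
  (∀ i, (A i).Nonempty) ∧ (∀ i j, i ≠ j → Disjoint (A i) (A j)) ∧
  (∀ i, A i ⊆ T.descW W u) ∧ (∀ i, T.connectedIn (A i)) ∧
  (∀ i, T.cutW W (A i) / T.wsum (A i) ≤ ξ) ∧
  ((T.descW W u \ Finset.univ.biUnion A).card ≤ l)

/-- `μ_ξ(u,k,l) = 1` relative to ground set `W`. -/
def muW (W : Finset V) (ξ : ℚ) (u : V) (k l : ℕ) : Prop :=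
  ∃ A : Fin k → Finset V, T.muWitnessW W ξ u A l

/-- `A` witnesses `μ_ξ(u,k,l) = 1` (in the whole tree `T`). -/
def muWitness (ξ : ℚ) (u : V) {k : ℕ} (A : Fin k → Finset V) (l : ℕ) : Prop :=
  T.muWitnessW Finset.univ ξ u A l

/-- `μ_ξ(u,k,l) = 1`. -/
def mu (ξ : ℚ) (u : V) (k l : ℕ) : Prop := T.muW Finset.univ ξ u k l

/-- Membership in `𝒞_ξ(u,k,l)` relative to ground set `W`: a connected
`k`-subpartition of `T_u` with `u ∈ A₁`, residue at most `l`, and conductance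
at most `ξ` for every part other than `A₁`. -/
def inCW (W : Finset V) (ξ : ℚ) (u : V) {k : ℕ} (A : Fin k → Finset V) (l : ℕ) : Prop :=
  (∀ i, (A i).Nonempty) ∧ (∀ i j, i ≠ j → Disjoint (A i) (A j)) ∧
  (∀ i, A i ⊆ T.descW W u) ∧ (∀ i, T.connectedIn (A i)) ∧
  (∀ h : 0 < k, u ∈ A ⟨0, h⟩) ∧
  (∀ i : Fin k, i.val ≠ 0 → T.cutW W (A i) / T.wsum (A i) ≤ ξ) ∧
  ((T.descW W u \ Finset.univ.biUnion A).card ≤ l)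

/-- Membership in `𝒞_ξ(u,k,l)`. -/
def inC (ξ : ℚ) (u : V) {k : ℕ} (A : Fin k → Finset V) (l : ℕ) : Prop :=
  T.inCW Finset.univ ξ u A l

/-- `γ_ξ(𝒜) = Σ_{e ∈ ∂A₁ \ {e_u}} ε_ξ(e)` relative to ground set `W`. -/
def gammaValW (W : Finset V) (ξ : ℚ) (u : V) (A1 : Finset V) : ℚ :=
  ∑ v ∈ (T.boundaryW W A1).erase u, (ξ * T.wsum (T.descW W v) + T.c v)

/-- `γ_ξ(𝒜) = Σ_{e ∈ ∂A₁ \ {e_u}} ε_ξ(e)`. -/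
def gammaVal (ξ : ℚ) (u : V) (A1 : Finset V) : ℚ := T.gammaValW Finset.univ ξ u A1

/-- `Γ_ξ(u,k,l) = min over 𝒞_ξ(u,k,l) of γ_ξ`, with value `+∞` (`⊤` of `EReal`)
when `𝒞_ξ(u,k,l)` is empty, relative to ground set `W`. -/
def GammaW (W : Finset V) (ξ : ℚ) (u : V) (k l : ℕ) : EReal :=
  sInf {x : EReal | ∃ (h : 0 < k) (A : Fin k → Finset V),
    T.inCW W ξ u A l ∧ x = ((T.gammaValW W ξ u (A ⟨0, h⟩) : ℝ) : EReal)}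

/-- `Γ_ξ(u,k,l)`. -/
def Gamma (ξ : ℚ) (u : V) (k l : ℕ) : EReal := T.GammaW Finset.univ ξ u k l

end RTree

namespace RTree

variable {V : Type} [Fintype V] [DecidableEq V] (T : RTree V)

lemma iterate_root (n : ℕ) : T.parent^[n] T.root = T.root := by
  induction n with
  | zero => rfl
  | succ n ih => rw [Function.iterate_succ_apply', ih, T.parent_root]

lemma eq_root_of_iterate_eq {v : V} {p : ℕ} (hp : 0 < p) (h : T.parent^[p] v = v) :
    v = T.root := by
  have hmul : ∀ j : ℕ, T.parent^[j * p] v = v := by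
    intro j
    induction j with
    | zero => simp
    | succ j ih => rw [Nat.succ_mul, Function.iterate_add_apply, h, ih]
  obtain ⟨N, hN⟩ := T.reaches_root v
  have hle : N ≤ N * p := Nat.le_mul_of_pos_right N hp
  have : T.parent^[N * p] v = T.root := by
    have := Function.iterate_add_apply T.parent (N * p - N) N v
    rw [Nat.sub_add_cancel hle] at this
    rw [this, hN, T.iterate_root]
  rw [← hmul N, this]

lemma below_refl (u : V) : T.below u u := ⟨0, rfl⟩

lemma below_trans {a b c : V} (h1 : T.below a b) (h2 : T.below b c) : T.below a c := by
  obtain ⟨n, hn⟩ := h1; obtain ⟨m, hm⟩ := h2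
  exact ⟨n + m, by rw [Function.iterate_add_apply, hm, hn]⟩

lemma below_antisymm {a b : V} (h1 : T.below a b) (h2 : T.below b a) : a = b := by
  obtain ⟨n, hn⟩ := h1; obtain ⟨m, hm⟩ := h2
  rcases Nat.eq_zero_or_pos (m + n) with h | h
  · obtain ⟨rfl, rfl⟩ := Nat.add_eq_zero.mp h
    simpa using hn.symm
  · have hb : b = T.root := T.eq_root_of_iterate_eq h (by rw [Function.iterate_add_apply, hn, hm])
    subst hb
    rw [← hn, T.iterate_root]

lemma mem_desc {u v : V} : v ∈ T.desc u ↔ T.below u v := by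
  simp [desc]

lemma self_mem_desc (u : V) : u ∈ T.desc u := T.mem_desc.mpr (T.below_refl u)

lemma desc_subset_of_below {u a : V} (h : T.below u a) : T.desc a ⊆ T.desc u := by
  intro v hv
  exact T.mem_desc.mpr (T.below_trans h (T.mem_desc.mp hv))

lemma parent_eq_self_iff {u : V} : T.parent u = u ↔ u = T.root := by
  constructor
  · intro h; exact T.eq_root_of_iterate_eq Nat.one_pos h
  · rintro rfl; exact T.parent_root

lemma parent_not_mem_desc {u : V} (h : u ≠ T.root) : T.parent u ∉ T.desc u := by
  intro hc
  obtain ⟨n, hn⟩ := T.mem_desc.mp hc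
  exact h (T.eq_root_of_iterate_eq (Nat.succ_pos n) (by rw [Function.iterate_succ_apply, hn]))

lemma parent_mem_desc {u v : V} (hv : v ∈ T.desc u) (hne : v ≠ u) :
    T.parent v ∈ T.desc u := by
  obtain ⟨n, hn⟩ := T.mem_desc.mp hv
  cases n with
  | zero => exact absurd hn hne
  | succ n =>
    exact T.mem_desc.mpr ⟨n, by rw [← hn, Function.iterate_succ_apply]⟩

lemma exists_child_of_mem_desc {u v : V} (hv : v ∈ T.desc u) (hne : v ≠ u) :
    ∃ w ∈ T.children u, v ∈ T.desc w := by
  have hex : ∃ n, T.parent^[n] v = u := T.mem_desc.mp hv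
  classical
  set n := Nat.find hex with hn
  have hfind : T.parent^[n] v = u := Nat.find_spec hex
  have hn0 : n ≠ 0 := by
    intro h0; apply hne; rw [← hfind, h0]; rfl
  refine ⟨T.parent^[n - 1] v, ?_, T.mem_desc.mpr ⟨n - 1, rfl⟩⟩
  have hpar : T.parent (T.parent^[n - 1] v) = u := by
    have h1 : T.parent^[(n - 1) + 1] v = T.parent (T.parent^[n - 1] v) :=
      Function.iterate_succ_apply' _ _ _
    rw [← h1, Nat.sub_add_cancel (Nat.one_le_iff_ne_zero.mpr hn0), hfind]
  refine Finset.mem_filter.mpr ⟨Finset.mem_univ _, hpar, ?_⟩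
  intro hc
  exact Nat.find_min hex (Nat.sub_lt (Nat.pos_of_ne_zero hn0) Nat.one_pos) hc

lemma mem_children {u w : V} : w ∈ T.children u ↔ T.parent w = u ∧ w ≠ u := by
  simp [children]

lemma child_mem_desc {u w : V} (h : w ∈ T.children u) : w ∈ T.desc u :=
  T.mem_desc.mpr ⟨1, (T.mem_children.mp h).1⟩

lemma desc_comparable {u v x : V} (hu : x ∈ T.desc u) (hv : x ∈ T.desc v) :
    T.below u v ∨ T.below v u := by
  obtain ⟨a, ha⟩ := T.mem_desc.mp hu
  obtain ⟨b, hb⟩ := T.mem_desc.mp hv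
  rcases le_total a b with h | h
  · right
    refine ⟨b - a, ?_⟩
    rw [← ha, ← Function.iterate_add_apply, Nat.sub_add_cancel h, hb]
  · left
    refine ⟨a - b, ?_⟩
    rw [← hb, ← Function.iterate_add_apply, Nat.sub_add_cancel h, ha]

lemma not_below_of_child {u w : V} (hw : w ∈ T.children u) : ¬ T.below w u := by
  intro h
  exact (T.mem_children.mp hw).2 (T.below_antisymm ⟨1, (T.mem_children.mp hw).1⟩ h).symm

lemma children_desc_disjoint {u : V} {w w' : V} (hw : w ∈ T.children u)
    (hw' : w' ∈ T.children u) (hne : w ≠ w') : Disjoint (T.desc w) (T.desc w') := by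
  rw [Finset.disjoint_left]
  intro x hx hx'
  rcases T.desc_comparable hx hx' with ⟨n, hn⟩ | ⟨n, hn⟩
  · cases n with
    | zero => simp at hn; exact hne hn.symm
    | succ n =>
      apply T.not_below_of_child hw
      rw [Function.iterate_succ_apply, (T.mem_children.mp hw').1] at hn
      exact ⟨n, hn⟩
  · cases n with
    | zero => simp at hn; exact hne hn
    | succ n =>
      apply T.not_below_of_child hw'
      rw [Function.iterate_succ_apply, (T.mem_children.mp hw).1] at hn
      exact ⟨n, hn⟩

/-- The lower endpoints of downward boundary edges of `A`. -/
def fringe (A : Finset V) : Finset V :=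
  Finset.univ.filter (fun v => v ∉ A ∧ T.parent v ∈ A)

lemma mem_fringe {A : Finset V} {v : V} : v ∈ T.fringe A ↔ v ∉ A ∧ T.parent v ∈ A := by
  simp [fringe]

lemma wsum_nonneg (A : Finset V) : 0 ≤ T.wsum A :=
  Finset.sum_nonneg (fun v _ => (T.w_pos v).le)

lemma wsum_pos {A : Finset V} (h : A.Nonempty) : 0 < T.wsum A :=
  Finset.sum_pos (fun v _ => T.w_pos v) h

lemma descW_univ (u : V) : T.descW Finset.univ u = T.desc u := by
  simp [descW]

lemma connected_apex {A : Finset V} {u : V} (hc : T.connectedIn A) (hu : u ∈ A)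
    (hA : ∀ v ∈ A, v ∈ T.desc u) :
    ∀ v ∈ A, ∃ n, T.parent^[n] v = u ∧ ∀ m ≤ n, T.parent^[m] v ∈ A := by
  obtain ⟨a, ha, hch⟩ := hc
  have hau : a = u := by
    obtain ⟨n, hn, _⟩ := hch u hu
    exact (T.below_antisymm (T.mem_desc.mp (hA a ha)) ⟨n, hn⟩).symm
  exact hau ▸ hch

lemma parent_mem_of_ne {A : Finset V} {u : V} (hc : T.connectedIn A) (hu : u ∈ A)
    (hA : ∀ v ∈ A, v ∈ T.desc u) {v : V} (hv : v ∈ A) (hne : v ≠ u) : T.parent v ∈ A := by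
  obtain ⟨n, hn, hpath⟩ := T.connected_apex hc hu hA v hv
  cases n with
  | zero => exact absurd hn hne
  | succ n =>
    have := hpath 1 (Nat.succ_le_succ (Nat.zero_le n))
    simpa using this

lemma boundary_erase_eq {A : Finset V} {u : V} (hc : T.connectedIn A) (hu : u ∈ A)
    (hA : ∀ v ∈ A, v ∈ T.desc u) : (T.boundary A).erase u = T.fringe A := by
  ext v
  simp only [boundary, boundaryW, fringe, Finset.mem_erase, Finset.mem_filter,
    Finset.mem_univ, true_and]
  simp only [Xor', Xor]
  constructor
  · rintro ⟨hne, ⟨h1, h2⟩ | ⟨h1, h2⟩⟩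
    · exact absurd (T.parent_mem_of_ne hc hu hA h1 hne) h2
    · exact ⟨h2, h1⟩
  · rintro ⟨h1, h2⟩
    exact ⟨fun h => h1 (h ▸ hu), Or.inr ⟨h2, h1⟩⟩

lemma cut_eq {A : Finset V} {u : V} (hc : T.connectedIn A) (hu : u ∈ A)
    (hA : ∀ v ∈ A, v ∈ T.desc u) : T.cut A = T.c u + ∑ v ∈ T.fringe A, T.c v := by
  rw [← T.boundary_erase_eq hc hu hA]
  by_cases hroot : u = T.root
  · have hub : u ∉ T.boundary A := by
      simp only [boundary, boundaryW, Finset.mem_filter, Finset.mem_univ, true_and]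
      simp only [Xor', Xor]
      subst hroot
      rw [T.parent_root]
      tauto
    rw [Finset.erase_eq_of_notMem hub]
    have : T.c u = 0 := by rw [hroot, T.c_root]
    rw [this, zero_add]
    rfl
  · have hub : u ∈ T.boundary A := by
      simp only [boundary, boundaryW, Finset.mem_filter, Finset.mem_univ, true_and]
      simp only [Xor', Xor]
      left
      refine ⟨hu, fun h => T.parent_not_mem_desc hroot (hA _ h)⟩
    rw [cut, cutW]
    exact (Finset.add_sum_erase (T.boundary A) T.c hub).symm

lemma fringe_mem_desc {A : Finset V} {u v : V} (hA : ∀ x ∈ A, x ∈ T.desc u)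
    (hv : v ∈ T.fringe A) : v ∈ T.desc u := by
  obtain ⟨_, hp⟩ := T.mem_fringe.mp hv
  exact T.mem_desc.mpr (T.below_trans (T.mem_desc.mp (hA _ hp)) ⟨1, rfl⟩)

lemma disj_fringe {A : Finset V} {u : V} (hc : T.connectedIn A) (hu : u ∈ A)
    (hA : ∀ v ∈ A, v ∈ T.desc u) {v : V} (hv : v ∈ T.fringe A) :
    Disjoint A (T.desc v) := by
  rw [Finset.disjoint_left]
  intro x hx hxd
  obtain ⟨hvA, hvp⟩ := T.mem_fringe.mp hv
  obtain ⟨j, hj⟩ := T.mem_desc.mp hxd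
  obtain ⟨n, hn, hpath⟩ := T.connected_apex hc hu hA x hx
  rcases le_or_gt j n with h | h
  · exact hvA (hj ▸ hpath j h)
  · have h1 : T.parent^[j - n] u = v := by
      rw [← hn, ← Function.iterate_add_apply, Nat.sub_add_cancel h.le, hj]
    have h2 : v ∈ T.desc u := T.fringe_mem_desc hA hv
    exact hvA ((T.below_antisymm (T.mem_desc.mp h2) ⟨j - n, h1⟩) ▸ hu)

lemma fringe_aux {A : Finset V} {u : V} (hc : T.connectedIn A) (hu : u ∈ A)
    (hA : ∀ v ∈ A, v ∈ T.desc u) {v v' : V} (hv : v ∈ T.fringe A) (hv' : v' ∈ T.fringe A)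
    (hne : v ≠ v') (hb : T.below v v') : False := by
  obtain ⟨n, hn⟩ := hb
  cases n with
  | zero => exact hne (by simpa using hn.symm)
  | succ n =>
    rw [Function.iterate_succ_apply] at hn
    have hp : T.parent v' ∈ T.desc v := T.mem_desc.mpr ⟨n, hn⟩
    exact (Finset.disjoint_left.mp (T.disj_fringe hc hu hA hv))
      (T.mem_fringe.mp hv').2 hp

lemma fringe_pairwise {A : Finset V} {u : V} (hc : T.connectedIn A) (hu : u ∈ A)
    (hA : ∀ v ∈ A, v ∈ T.desc u) :
    (↑(T.fringe A) : Set V).PairwiseDisjoint T.desc := by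
  intro v hv v' hv' hne
  rw [Function.onFun, Finset.disjoint_left]
  intro x hx hx'
  rcases T.desc_comparable hx hx' with hb | hb
  · exact T.fringe_aux hc hu hA hv hv' hne hb
  · exact T.fringe_aux hc hu hA hv' hv (Ne.symm hne) hb

lemma desc_eq_union {A : Finset V} {u : V} (hc : T.connectedIn A) (hu : u ∈ A)
    (hA : ∀ v ∈ A, v ∈ T.desc u) :
    T.desc u = A ∪ (T.fringe A).biUnion T.desc := by
  ext x
  constructor
  · intro hx
    by_cases hxA : x ∈ A
    · exact Finset.mem_union_left _ hxA
    · obtain ⟨n0, hn0⟩ := T.mem_desc.mp hx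
      have hex : ∃ m, T.parent^[m] x ∈ A := ⟨n0, hn0 ▸ hu⟩
      classical
      set m := Nat.find hex with hmdef
      have hm : T.parent^[m] x ∈ A := Nat.find_spec hex
      have hm0 : m ≠ 0 := fun h => hxA (by simpa [h] using hm)
      refine Finset.mem_union_right _ (Finset.mem_biUnion.mpr
        ⟨T.parent^[m - 1] x, ?_, T.mem_desc.mpr ⟨m - 1, rfl⟩⟩)
      refine T.mem_fringe.mpr ⟨Nat.find_min hex (by omega), ?_⟩
      have h1 : T.parent^[(m - 1) + 1] x = T.parent (T.parent^[m - 1] x) :=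
        Function.iterate_succ_apply' _ _ _
      rw [← h1, Nat.sub_add_cancel (Nat.one_le_iff_ne_zero.mpr hm0)]
      exact hm
  · intro hx
    rcases Finset.mem_union.mp hx with h | h
    · exact hA x h
    · obtain ⟨v, hv, hxd⟩ := Finset.mem_biUnion.mp h
      exact T.desc_subset_of_below (T.mem_desc.mp (T.fringe_mem_desc hA hv)) hxd

lemma wsum_partition {A : Finset V} {u : V} (hc : T.connectedIn A) (hu : u ∈ A)
    (hA : ∀ v ∈ A, v ∈ T.desc u) :
    T.wsum (T.desc u) = T.wsum A + ∑ v ∈ T.fringe A, T.wsum (T.desc v) := by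
  have hdisj : Disjoint A ((T.fringe A).biUnion T.desc) := by
    rw [Finset.disjoint_biUnion_right]
    exact fun v hv => T.disj_fringe hc hu hA hv
  rw [wsum, T.desc_eq_union hc hu hA, Finset.sum_union hdisj,
    Finset.sum_biUnion (T.fringe_pairwise hc hu hA)]
  rfl


lemma gamma_eq {A : Finset V} {u : V} (hc : T.connectedIn A) (hu : u ∈ A)
    (hA : ∀ v ∈ A, v ∈ T.desc u) (ξ : ℚ) :
    T.gammaValW Finset.univ ξ u A = ∑ v ∈ T.fringe A, (ξ * T.wsum (T.desc v) + T.c v) := by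
  have hb : (T.boundaryW Finset.univ A).erase u = T.fringe A := T.boundary_erase_eq hc hu hA
  rw [gammaValW, hb]
  exact Finset.sum_congr rfl (fun v _ => by rw [T.descW_univ])

lemma gamma_identity {A : Finset V} {u : V} (hc : T.connectedIn A) (hu : u ∈ A)
    (hA : ∀ v ∈ A, v ∈ T.desc u) (ξ : ℚ) :
    T.gammaValW Finset.univ ξ u A
      = ξ * (T.wsum (T.desc u) - T.wsum A) + (T.cut A - T.c u) := by
  rw [T.gamma_eq hc hu hA ξ, Finset.sum_add_distrib, ← Finset.mul_sum]
  have h1 : ∑ v ∈ T.fringe A, T.wsum (T.desc v) = T.wsum (T.desc u) - T.wsum A := by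
    have := T.wsum_partition hc hu hA
    linarith
  have h2 : ∑ v ∈ T.fringe A, T.c v = T.cut A - T.c u := by
    have := T.cut_eq hc hu hA
    linarith
  rw [h1, h2]

lemma cond_iff {ξ : ℚ} {A : Finset V} (hne : A.Nonempty) :
    T.cutW Finset.univ A / T.wsum A ≤ ξ ↔ T.cut A ≤ ξ * T.wsum A := by
  rw [div_le_iff₀ (T.wsum_pos hne)]
  exact Iff.rfl

lemma Gamma_le {ξ : ℚ} {u : V} {k l : ℕ} (h : 0 < k) (A : Fin k → Finset V)
    (hA : T.inCW Finset.univ ξ u A l) :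
    T.Gamma ξ u k l ≤ ((T.gammaValW Finset.univ ξ u (A ⟨0, h⟩) : ℝ) : EReal) :=
  sInf_le ⟨h, A, hA, rfl⟩

lemma exists_of_Gamma_le {ξ b : ℚ} {u : V} {k l : ℕ}
    (hG : T.Gamma ξ u k l ≤ ((b : ℝ) : EReal)) :
    ∃ (h : 0 < k) (A : Fin k → Finset V), T.inCW Finset.univ ξ u A l ∧
      T.gammaValW Finset.univ ξ u (A ⟨0, h⟩) ≤ b := by
  classical
  set S : Set EReal := {x : EReal | ∃ (h : 0 < k) (A : Fin k → Finset V),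
    T.inCW Finset.univ ξ u A l ∧ x = ((T.gammaValW Finset.univ ξ u (A ⟨0, h⟩) : ℝ) : EReal)}
    with hS
  have hGS : T.Gamma ξ u k l = sInf S := rfl
  have hSne : S.Nonempty := by
    by_contra hemp
    rw [Set.not_nonempty_iff_eq_empty] at hemp
    rw [hGS, hemp, sInf_empty] at hG
    exact absurd hG (by simp)
  obtain ⟨x0, hx0⟩ := hSne
  have h : 0 < k := by obtain ⟨h, _⟩ := hx0; exact h
  have hfin : S.Finite := by
    apply Set.Finite.subset (Set.finite_range
      (fun A : Fin k → Finset V => ((T.gammaValW Finset.univ ξ u (A ⟨0, h⟩) : ℝ) : EReal)))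
    rintro x ⟨h', A, _, rfl⟩
    exact ⟨A, rfl⟩
  have hmem : sInf S ∈ S := Set.Nonempty.csInf_mem ⟨x0, hx0⟩ hfin
  obtain ⟨h', A, hin, heq⟩ := hmem
  refine ⟨h', A, hin, ?_⟩
  rw [hGS, heq] at hG
  exact_mod_cast hG

lemma mu_mono_l {ξ : ℚ} {u : V} {k l l' : ℕ} (h : l ≤ l') (hmu : T.mu ξ u k l) :
    T.mu ξ u k l' := by
  obtain ⟨A, h1, h2, h3, h4, h5, h6⟩ := hmu
  exact ⟨A, h1, h2, h3, h4, h5, le_trans h6 h⟩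

lemma part_subset_child {A : Finset V} {u : V} (hc : T.connectedIn A) (hne : A.Nonempty)
    (hA : ∀ v ∈ A, v ∈ T.desc u) (hu : u ∉ A) :
    ∃ w ∈ T.children u, ∀ x ∈ A, x ∈ T.desc w := by
  obtain ⟨a, ha, hch⟩ := hc
  have hAa : ∀ x ∈ A, x ∈ T.desc a := by
    intro x hx
    obtain ⟨n, hn, _⟩ := hch x hx
    exact T.mem_desc.mpr ⟨n, hn⟩
  have hau : a ∈ T.desc u := hA a ha
  have hane : a ≠ u := fun h => hu (h ▸ ha)
  obtain ⟨w, hw, haw⟩ := T.exists_child_of_mem_desc hau hane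
  exact ⟨w, hw, fun x hx => T.desc_subset_of_below (T.mem_desc.mp haw) (hAa x hx)⟩

lemma biUnion_comp_equiv {k : ℕ} (A : Fin k → Finset V) (e : Fin k ≃ Fin k) :
    Finset.univ.biUnion (fun i => A (e i)) = Finset.univ.biUnion A := by
  ext x
  simp only [Finset.mem_biUnion, Finset.mem_univ, true_and]
  exact ⟨fun ⟨i, h⟩ => ⟨e i, h⟩, fun ⟨i, h⟩ => ⟨e.symm i, by simpa using h⟩⟩

lemma desc_child_subset {u w : V} (hw : w ∈ T.children u) : T.desc w ⊆ T.desc u :=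
  T.desc_subset_of_below ⟨1, (T.mem_children.mp hw).1⟩


lemma backward_Gamma {ξ : ℚ} {u : V} {k l : ℕ}
    (hG : T.Gamma ξ u k l ≤ (((ξ * T.wsum (T.desc u) - T.c u : ℚ) : ℝ) : EReal)) :
    T.mu ξ u k l := by
  obtain ⟨h0, A, hin, hγ⟩ := T.exists_of_Gamma_le hG
  obtain ⟨h1, h2, h3, h4, h5, h6, h7⟩ := hin
  refine ⟨A, h1, h2, h3, h4, ?_, h7⟩
  intro i
  by_cases hi : i.val = 0
  · have hieq : i = ⟨0, h0⟩ := Fin.ext hi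
    subst hieq
    have hu : u ∈ A ⟨0, h0⟩ := h5 h0
    have hA0 : ∀ v ∈ A ⟨0, h0⟩, v ∈ T.desc u := fun v hv => by
      have := h3 _ hv; rwa [T.descW_univ] at this
    have hid := T.gamma_identity (h4 _) hu hA0 ξ
    rw [T.cond_iff (h1 _)]
    have hring : ξ * (T.wsum (T.desc u) - T.wsum (A ⟨0, h0⟩))
        = ξ * T.wsum (T.desc u) - ξ * T.wsum (A ⟨0, h0⟩) := by ring
    linarith [hγ, hid, hring]
  · exact h6 i hi

lemma backward_children {ξ : ℚ} {u : V} {k l : ℕ}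
    (f g : V → ℕ) (hf : (∑ v ∈ T.children u, f v) = k)
    (hg : (∑ v ∈ T.children u, g v) + 1 = l)
    (hmu : ∀ v ∈ T.children u, T.mu ξ v (f v) (g v)) : T.mu ξ u k l := by
  classical
  have hBex : ∀ v : {x // x ∈ T.children u}, ∃ B : Fin (f v) → Finset V,
      T.muWitnessW Finset.univ ξ v B (g v) := fun v => hmu v v.2
  choose B hBspec using hBex
  have hcard : Fintype.card (Σ v : {x // x ∈ T.children u}, Fin (f v)) = k := by
    rw [Fintype.card_sigma]
    simp only [Fintype.card_fin]
    rw [← hf]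
    exact Finset.sum_coe_sort (T.children u) f
  let e : (Σ v : {x // x ∈ T.children u}, Fin (f v)) ≃ Fin k := Fintype.equivFinOfCardEq hcard
  refine ⟨fun i => B (e.symm i).1 (e.symm i).2, fun i => (hBspec _).1 _, ?_, ?_,
    fun i => (hBspec _).2.2.2.1 _, fun i => (hBspec _).2.2.2.2.1 _, ?_⟩
  · -- pairwise disjoint
    intro i j hij
    have hsne : e.symm i ≠ e.symm j := fun h => hij (by
      have := congrArg e h; simpa using this)
    have key : ∀ s t : (Σ v : {x // x ∈ T.children u}, Fin (f v)), s ≠ t →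
        Disjoint (B s.1 s.2) (B t.1 t.2) := by
      rintro ⟨v1, j1⟩ ⟨v2, j2⟩ hst
      by_cases hv : v1 = v2
      · subst hv
        have hj : j1 ≠ j2 := fun h => hst (by rw [h])
        exact (hBspec v1).2.1 j1 j2 hj
      · have hd : Disjoint (T.desc ↑v1) (T.desc ↑v2) :=
          T.children_desc_disjoint v1.2 v2.2 (fun h => hv (Subtype.ext h))
        refine Finset.disjoint_of_subset_left ?_ (Finset.disjoint_of_subset_right ?_ hd)
        · intro x hx
          have := (hBspec v1).2.2.1 j1 hx
          rwa [T.descW_univ] at this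
        · intro x hx
          have := (hBspec v2).2.2.1 j2 hx
          rwa [T.descW_univ] at this
    exact key _ _ hsne
  · -- subsets
    intro i x hx
    rw [T.descW_univ]
    apply T.desc_child_subset (e.symm i).1.2
    have := (hBspec (e.symm i).1).2.2.1 (e.symm i).2 hx
    rwa [T.descW_univ] at this
  · -- residue
    set X := Finset.univ.biUnion (fun i => B (e.symm i).1 (e.symm i).2) with hX
    have hsub : T.descW Finset.univ u \ X ⊆
        insert u ((T.children u).attach.biUnion
          (fun v => T.desc ↑v \ Finset.univ.biUnion (B v))) := by
      intro x hx
      rw [T.descW_univ] at hx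
      obtain ⟨hxd, hxX⟩ := Finset.mem_sdiff.mp hx
      by_cases hxu : x = u
      · exact Finset.mem_insert.mpr (Or.inl hxu)
      · obtain ⟨w, hw, hxw⟩ := T.exists_child_of_mem_desc hxd hxu
        refine Finset.mem_insert.mpr (Or.inr (Finset.mem_biUnion.mpr
          ⟨⟨w, hw⟩, Finset.mem_attach _ _, Finset.mem_sdiff.mpr ⟨hxw, ?_⟩⟩))
        intro hc
        obtain ⟨j, _, hj⟩ := Finset.mem_biUnion.mp hc
        apply hxX
        rw [hX]
        refine Finset.mem_biUnion.mpr ⟨e ⟨⟨w, hw⟩, j⟩, Finset.mem_univ _, ?_⟩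
        rw [Equiv.symm_apply_apply]
        exact hj
    have hc1 := Finset.card_le_card hsub
    have hc2 := Finset.card_insert_le u ((T.children u).attach.biUnion
      (fun v => T.desc ↑v \ Finset.univ.biUnion (B v)))
    have hc3 := Finset.card_biUnion_le (s := (T.children u).attach)
      (t := fun v => T.desc ↑v \ Finset.univ.biUnion (B v))
    have hc4 : ∑ v ∈ (T.children u).attach, (T.desc ↑v \ Finset.univ.biUnion (B v)).card
        ≤ ∑ v ∈ (T.children u).attach, g ↑v := by
      apply Finset.sum_le_sum
      intro v _
      have := (hBspec v).2.2.2.2.2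
      rwa [T.descW_univ] at this
    have hc5 : ∑ v ∈ (T.children u).attach, g ↑v = ∑ v ∈ T.children u, g v :=
      Finset.sum_attach _ _
    omega


lemma forward_mem {ξ : ℚ} {u : V} {k l : ℕ} (h0 : 0 < k) {A : Fin k → Finset V}
    (hW : T.muWitnessW Finset.univ ξ u A l) {i : Fin k} (hui : u ∈ A i) :
    T.Gamma ξ u k l ≤ (((ξ * T.wsum (T.desc u) - T.c u : ℚ) : ℝ) : EReal) := by
  obtain ⟨h1, h2, h3, h4, h5, h6⟩ := hW
  set e := Equiv.swap (⟨0, h0⟩ : Fin k) i with he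
  have hin : T.inCW Finset.univ ξ u (fun j => A (e j)) l := by
    refine ⟨fun j => h1 _, fun j j' hjj => h2 _ _ (fun hh => hjj (e.injective hh)),
      fun j => h3 _, fun j => h4 _, ?_, fun j _ => h5 _, ?_⟩
    · intro h
      show u ∈ A (e ⟨0, h⟩)
      have heq : e ⟨0, h⟩ = i := Equiv.swap_apply_left _ _
      rw [heq]; exact hui
    · rw [biUnion_comp_equiv A e]
      exact h6
  have hle := T.Gamma_le h0 (fun j => A (e j)) hin
  refine le_trans hle ?_
  have hA0 : A (e ⟨0, h0⟩) = A i := by rw [Equiv.swap_apply_left]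
  have hAi : ∀ v ∈ A i, v ∈ T.desc u := fun v hv => by
    have := h3 i hv; rwa [T.descW_univ] at this
  have hbound : T.gammaValW Finset.univ ξ u (A (e ⟨0, h0⟩)) ≤ ξ * T.wsum (T.desc u) - T.c u := by
    rw [hA0]
    have hid := T.gamma_identity (h4 i) hui hAi ξ
    have hcond : T.cut (A i) ≤ ξ * T.wsum (A i) := (T.cond_iff (h1 i)).mp (h5 i)
    have hring : ξ * (T.wsum (T.desc u) - T.wsum (A i))
        = ξ * T.wsum (T.desc u) - ξ * T.wsum (A i) := by ring
    linarith [hid, hcond, hring]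
  exact_mod_cast hbound

lemma forward_not_mem {ξ : ℚ} {u : V} {k l : ℕ} (h0 : 0 < k) {A : Fin k → Finset V}
    (hW : T.muWitnessW Finset.univ ξ u A l) (hnu : ∀ i, u ∉ A i) :
    ∃ f g : V → ℕ, (∑ v ∈ T.children u, f v) = k ∧ (∑ v ∈ T.children u, g v) + 1 = l ∧
      ∀ v ∈ T.children u, T.mu ξ v (f v) (g v) := by
  classical
  obtain ⟨h1, h2, h3, h4, h5, h6⟩ := hW
  have hchoose : ∀ i : Fin k, ∃ w ∈ T.children u, ∀ x ∈ A i, x ∈ T.desc w := by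
    intro i
    refine T.part_subset_child (h4 i) (h1 i) (fun v hv => ?_) (hnu i)
    have := h3 i hv; rwa [T.descW_univ] at this
  choose ch hch1 hch2 using hchoose
  set X := Finset.univ.biUnion A with hX
  have huX : u ∉ X := by
    rw [hX]
    simp only [Finset.mem_biUnion]
    rintro ⟨i, _, hi⟩
    exact hnu i hi
  set f : V → ℕ := fun v => (Finset.univ.filter (fun i : Fin k => ch i = v)).card with hf
  set g0 : V → ℕ := fun v => (T.desc v \ X).card with hg0
  have hfk : (∑ v ∈ T.children u, f v) = k := by
    have := Finset.card_eq_sum_card_fiberwise (fun i (_ : i ∈ Finset.univ) => hch1 i)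
    simpa [hf] using this.symm
  have hsum_le : (∑ v ∈ T.children u, g0 v) + 1 ≤ l := by
    have hcard : ((T.children u).biUnion (fun v => T.desc v \ X)).card
        = ∑ v ∈ T.children u, g0 v := by
      apply Finset.card_biUnion
      intro a ha b hb hab
      exact Finset.disjoint_of_subset_left Finset.sdiff_subset
        (Finset.disjoint_of_subset_right Finset.sdiff_subset
          (T.children_desc_disjoint ha hb hab))
    have hsub : (T.children u).biUnion (fun v => T.desc v \ X)
        ⊆ (T.desc u \ X).erase u := by
      intro x hx
      obtain ⟨v, hv, hxv⟩ := Finset.mem_biUnion.mp hx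
      obtain ⟨hxd, hxX⟩ := Finset.mem_sdiff.mp hxv
      refine Finset.mem_erase.mpr ⟨?_, Finset.mem_sdiff.mpr ⟨T.desc_child_subset hv hxd, hxX⟩⟩
      intro hxu
      subst hxu
      exact T.not_below_of_child hv (T.mem_desc.mp hxd)
    have hc1 := Finset.card_le_card hsub
    have hc2 : ((T.desc u \ X).erase u).card = (T.desc u \ X).card - 1 :=
      Finset.card_erase_of_mem (Finset.mem_sdiff.mpr ⟨T.self_mem_desc u, huX⟩)
    have hc3 : 0 < (T.desc u \ X).card :=
      Finset.card_pos.mpr ⟨u, Finset.mem_sdiff.mpr ⟨T.self_mem_desc u, huX⟩⟩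
    have hc4 : (T.desc u \ X).card ≤ l := by
      have := h6
      rwa [T.descW_univ] at this
    omega
  have hmu0 : ∀ v ∈ T.children u, T.mu ξ v (f v) (g0 v) := by
    intro v hv
    set Iv := Finset.univ.filter (fun i : Fin k => ch i = v) with hIv
    have hfv : f v = Iv.card := rfl
    have hchv : ∀ i ∈ Iv, ch i = v := fun i hi => (Finset.mem_filter.mp hi).2
    set eIv := Iv.equivFin with heIv
    set idx : Fin (f v) → Fin k := fun j => ↑(eIv.symm (Fin.cast hfv j)) with hidx
    have hidxmem : ∀ j, idx j ∈ Iv := fun j => (eIv.symm (Fin.cast hfv j)).2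
    have hidxinj : Function.Injective idx := by
      intro a b hab
      have h1' : eIv.symm (Fin.cast hfv a) = eIv.symm (Fin.cast hfv b) := Subtype.ext hab
      have := eIv.symm.injective h1'
      exact Fin.ext (by simpa [Fin.ext_iff] using congrArg Fin.val this)
    refine ⟨fun j => A (idx j), fun j => h1 _, fun j j' hjj => h2 _ _ (fun hh => hjj (hidxinj hh)),
      ?_, fun j => h4 _, fun j => h5 _, ?_⟩
    · intro j x hx
      rw [T.descW_univ]
      have hchj : ch (idx j) = v := hchv _ (hidxmem j)
      exact hchj ▸ hch2 (idx j) x hx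
    · have hsub : T.descW Finset.univ v \ Finset.univ.biUnion (fun j => A (idx j))
          ⊆ T.desc v \ X := by
        intro x hx
        rw [T.descW_univ] at hx
        obtain ⟨hxd, hxB⟩ := Finset.mem_sdiff.mp hx
        refine Finset.mem_sdiff.mpr ⟨hxd, ?_⟩
        intro hxX
        obtain ⟨i, _, hxi⟩ := Finset.mem_biUnion.mp hxX
        by_cases hchi : ch i = v
        · apply hxB
          have hiIv : i ∈ Iv := Finset.mem_filter.mpr ⟨Finset.mem_univ _, hchi⟩
          refine Finset.mem_biUnion.mpr ⟨Fin.cast hfv.symm (eIv ⟨i, hiIv⟩), Finset.mem_univ _, ?_⟩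
          show x ∈ A (idx (Fin.cast hfv.symm (eIv ⟨i, hiIv⟩)))
          have hcc : Fin.cast hfv (Fin.cast hfv.symm (eIv ⟨i, hiIv⟩)) = eIv ⟨i, hiIv⟩ :=
            Fin.ext rfl
          have hkey : idx (Fin.cast hfv.symm (eIv ⟨i, hiIv⟩)) = i := by
            show ((eIv.symm (Fin.cast hfv (Fin.cast hfv.symm (eIv ⟨i, hiIv⟩)))) : Fin k) = i
            rw [hcc, Equiv.symm_apply_apply]
          rw [hkey]
          exact hxi
        · have hxv' : x ∈ T.desc (ch i) := hch2 i x hxi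
          exact Finset.disjoint_left.mp
            (T.children_desc_disjoint hv (hch1 i) (fun h => hchi h.symm)) hxd hxv'
      exact le_trans (Finset.card_le_card hsub) le_rfl
  set v0 := ch ⟨0, h0⟩ with hv0
  have hv0mem : v0 ∈ T.children u := hch1 _
  set g : V → ℕ := fun v => g0 v + (if v = v0 then l - 1 - (∑ w ∈ T.children u, g0 w) else 0)
    with hg
  refine ⟨f, g, hfk, ?_, ?_⟩
  · rw [hg]
    rw [Finset.sum_add_distrib, Finset.sum_ite_eq' (T.children u) v0
      (fun _ => l - 1 - (∑ w ∈ T.children u, g0 w)), if_pos hv0mem]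
    omega
  · intro v hv
    exact T.mu_mono_l (Nat.le_add_right _ _) (hmu0 v hv)


end RTree

/-- characterization of μ, Lemma 1: `μ_ξ(u,k,l) = 1` iff either
`Γ_ξ(u,k,l) ≤ ξ·ω(T_u) − c(e_u)`, or there exist `k_i` with `Σ k_i = k` and
`l_i` with `Σ l_i = l − 1` (written `Σ l_i + 1 = l`) such that
`μ_ξ(u_i,k_i,l_i) = 1` for every child `u_i` of `u`. -/
theorem stmt12 {V : Type} [Fintype V] [DecidableEq V] (T : RTree V)
    (ξ : ℚ) (hξ : 0 ≤ ξ) (u : V) (k l : ℕ) (hk : 1 ≤ k) :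
    T.mu ξ u k l ↔
      (T.Gamma ξ u k l ≤ (((ξ * T.wsum (T.desc u) - T.c u : ℚ) : ℝ) : EReal) ∨
       ∃ f g : V → ℕ, (∑ v ∈ T.children u, f v) = k ∧ (∑ v ∈ T.children u, g v) + 1 = l ∧
         ∀ v ∈ T.children u, T.mu ξ v (f v) (g v)) := by
  constructor
  · rintro ⟨A, hW⟩
    by_cases hu : ∃ i, u ∈ A i
    · obtain ⟨i, hi⟩ := hu
      exact Or.inl (T.forward_mem (by omega) hW hi)
    · push_neg at hu
      exact Or.inr (T.forward_not_mem (by omega) hW hu)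
  · rintro (h | ⟨f, g, hf, hg, hmu⟩)
    · exact T.backward_Gamma h
    · exact T.backward_children f g hf hg hmu
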